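/- Cost of ignoring the backward link: if a lossless code is designed for the incorrect distribution q(x^n,y^n) = p(x^n)·p(y^n||x^n), then E_p[−log q(X^n,Y^n)] = I(Y^{n-1} → X^n) + H(X^n,Y^n); moreover the sum of the redundancies from ignoring the forward link and the backward link equals I(X^n; Y^n), the redundancy from ignoring both links. -/

import Mathlib

open scoped Classical
open Real

noncomputable section

variable {α β : Type} [Fintype α] [DecidableEq α] [Fintype β] [DecidableEq β]

/-- Probability of the event `E` under the joint pmf `p` of `(X^n, Y^n)`. -/
def pr {n : ℕ} (p : (Fin n → α) → (Fin n → β) → ℝ)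
    (E : (Fin n → α) → (Fin n → β) → Prop) : ℝ :=
  ∑ x, ∑ y, if E x y then p x y else 0

/-- `p` is a probability mass function on pairs of sequences. -/
def IsPmf {n : ℕ} (p : (Fin n → α) → (Fin n → β) → ℝ) : Prop :=
  (∀ x y, 0 ≤ p x y) ∧ ∑ x, ∑ y, p x y = 1

/-- The conditional pmf `p(x_i | x^{i-1}, y^{i-d})` evaluated along `(x, y)`. -/
def condX {n : ℕ} (p : (Fin n → α) → (Fin n → β) → ℝ) (d : ℕ) (i : Fin n)
    (x : Fin n → α) (y : Fin n → β) : ℝ :=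
  pr p (fun x' y' => (∀ j, j < i → x' j = x j) ∧ x' i = x i ∧
      ∀ j : Fin n, (j : ℕ) + d ≤ (i : ℕ) → y' j = y j) /
  pr p (fun x' y' => (∀ j, j < i → x' j = x j) ∧
      ∀ j : Fin n, (j : ℕ) + d ≤ (i : ℕ) → y' j = y j)

/-- The conditional pmf `p(y_i | y^{i-1}, x^{i-d})` evaluated along `(x, y)`. -/
def condY {n : ℕ} (p : (Fin n → α) → (Fin n → β) → ℝ) (d : ℕ) (i : Fin n)
    (x : Fin n → α) (y : Fin n → β) : ℝ :=
  pr p (fun x' y' => (∀ j, j < i → y' j = y j) ∧ y' i = y i ∧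
      ∀ j : Fin n, (j : ℕ) + d ≤ (i : ℕ) → x' j = x j) /
  pr p (fun x' y' => (∀ j, j < i → y' j = y j) ∧
      ∀ j : Fin n, (j : ℕ) + d ≤ (i : ℕ) → x' j = x j)

/-- Causally conditioned pmf `p(x^n || y^{n-d}) = ∏ᵢ p(xᵢ | x^{i-1}, y^{i-d})`. -/
def ccX {n : ℕ} (p : (Fin n → α) → (Fin n → β) → ℝ) (d : ℕ)
    (x : Fin n → α) (y : Fin n → β) : ℝ :=
  ∏ i, condX p d i x y

/-- Causally conditioned pmf `p(y^n || x^{n-d}) = ∏ᵢ p(yᵢ | y^{i-1}, x^{i-d})`. -/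
def ccY {n : ℕ} (p : (Fin n → α) → (Fin n → β) → ℝ) (d : ℕ)
    (x : Fin n → α) (y : Fin n → β) : ℝ :=
  ∏ i, condY p d i x y

/-- Marginal pmf of `X^n`. -/
def pX {n : ℕ} (p : (Fin n → α) → (Fin n → β) → ℝ) (x : Fin n → α) : ℝ := ∑ y, p x y

/-- Marginal pmf of `Y^n`. -/
def pY {n : ℕ} (p : (Fin n → α) → (Fin n → β) → ℝ) (y : Fin n → β) : ℝ := ∑ x, p x y

/-- `H(X^n)` in bits. -/
def HX {n : ℕ} (p : (Fin n → α) → (Fin n → β) → ℝ) : ℝ :=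
  -(∑ x, ∑ y, p x y * Real.logb 2 (pX p x))

/-- `H(Y^n)` in bits. -/
def HY {n : ℕ} (p : (Fin n → α) → (Fin n → β) → ℝ) : ℝ :=
  -(∑ x, ∑ y, p x y * Real.logb 2 (pY p y))

/-- Joint entropy `H(X^n, Y^n)` in bits. -/
def Hjoint {n : ℕ} (p : (Fin n → α) → (Fin n → β) → ℝ) : ℝ :=
  -(∑ x, ∑ y, p x y * Real.logb 2 (p x y))

/-- Conditional entropy `H(X_i | X^{i-1}, Y^{i-d})` in bits. -/
def HcondX {n : ℕ} (p : (Fin n → α) → (Fin n → β) → ℝ) (d : ℕ) (i : Fin n) : ℝ :=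
  -(∑ x, ∑ y, p x y * Real.logb 2 (condX p d i x y))

/-- Conditional entropy `H(Y_i | Y^{i-1}, X^{i-d})` in bits. -/
def HcondY {n : ℕ} (p : (Fin n → α) → (Fin n → β) → ℝ) (d : ℕ) (i : Fin n) : ℝ :=
  -(∑ x, ∑ y, p x y * Real.logb 2 (condY p d i x y))

/-- Causally conditional entropy `H(X^n || Y^{n-d}) = Σᵢ H(Xᵢ | X^{i-1}, Y^{i-d})`. -/
def HccX {n : ℕ} (p : (Fin n → α) → (Fin n → β) → ℝ) (d : ℕ) : ℝ := ∑ i, HcondX p d i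

/-- Causally conditional entropy `H(Y^n || X^{n-d})`. -/
def HccY {n : ℕ} (p : (Fin n → α) → (Fin n → β) → ℝ) (d : ℕ) : ℝ := ∑ i, HcondY p d i

/-- Conditional mutual information `I(Y^i; X_i | X^{i-1})`
(as the expectation of `log (p(xᵢ|x^{i-1},y^i) / p(xᵢ|x^{i-1}))`;
note `condX p n` is `p(xᵢ|x^{i-1})`, conditioning on no `y`'s at all). -/
def cmiYX {n : ℕ} (p : (Fin n → α) → (Fin n → β) → ℝ) (i : Fin n) : ℝ :=
  ∑ x, ∑ y, p x y * Real.logb 2 (condX p 0 i x y / condX p n i x y)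

/-- Conditional mutual information `I(X^i; Y_i | Y^{i-1})`. -/
def cmiXY {n : ℕ} (p : (Fin n → α) → (Fin n → β) → ℝ) (i : Fin n) : ℝ :=
  ∑ x, ∑ y, p x y * Real.logb 2 (condY p 0 i x y / condY p n i x y)

/-- Directed information `I(Y^n → X^n) = Σᵢ I(Y^i; X_i | X^{i-1})`. -/
def dirYX {n : ℕ} (p : (Fin n → α) → (Fin n → β) → ℝ) : ℝ := ∑ i, cmiYX p i

/-- Directed information `I(X^n → Y^n) = Σᵢ I(X^i; Y_i | Y^{i-1})`. -/
def dirXY {n : ℕ} (p : (Fin n → α) → (Fin n → β) → ℝ) : ℝ := ∑ i, cmiXY p i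

/-- Directed information `I(Y^{n-1} → X^n) = Σᵢ I(Y^{i-1}; X_i | X^{i-1})`
(the term for `i = 1` vanishes, so we may sum over all `i`). -/
def dirY1X {n : ℕ} (p : (Fin n → α) → (Fin n → β) → ℝ) : ℝ :=
  ∑ i, ∑ x, ∑ y, p x y * Real.logb 2 (condX p 1 i x y / condX p n i x y)

/-- Mutual information `I(X^n; Y^n)` in bits. -/
def miXY {n : ℕ} (p : (Fin n → α) → (Fin n → β) → ℝ) : ℝ :=
  ∑ x, ∑ y, p x y * Real.logb 2 (p x y / (pX p x * pY p y))

/-! ### Auxiliary lemmas -/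
set_option linter.unusedSectionVars false

lemma pr_congr {n : ℕ} (p : (Fin n → α) → (Fin n → β) → ℝ)
    {E E' : (Fin n → α) → (Fin n → β) → Prop} (h : ∀ x y, E x y ↔ E' x y) :
    pr p E = pr p E' := by
  unfold pr
  refine Finset.sum_congr rfl fun x _ => Finset.sum_congr rfl fun y _ => ?_
  simp [h x y]

lemma le_pr {n : ℕ} {p : (Fin n → α) → (Fin n → β) → ℝ} (hp : IsPmf p)
    {E : (Fin n → α) → (Fin n → β) → Prop} {x : Fin n → α} {y : Fin n → β}
    (h : E x y) : p x y ≤ pr p E := by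
  unfold pr
  have h1 : p x y ≤ ∑ y', if E x y' then p x y' else 0 := by
    have := Finset.single_le_sum (f := fun y' => if E x y' then p x y' else 0)
      (fun y' _ => by by_cases hE : E x y' <;> simp [hE, hp.1 x y']) (Finset.mem_univ y)
    simpa [h] using this
  refine h1.trans ?_
  exact Finset.single_le_sum (f := fun x' => ∑ y', if E x' y' then p x' y' else 0)
    (fun x' _ => Finset.sum_nonneg fun y' _ => by by_cases hE : E x' y' <;> simp [hE, hp.1 x' y'])
    (Finset.mem_univ x)

/-- The probability that `X^a = x^a` and `Y^b = y^b`. -/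
def Fab {n : ℕ} (p : (Fin n → α) → (Fin n → β) → ℝ)
    (x : Fin n → α) (y : Fin n → β) (a b : ℕ) : ℝ :=
  pr p (fun x' y' => (∀ j : Fin n, (j : ℕ) < a → x' j = x j) ∧
      (∀ j : Fin n, (j : ℕ) < b → y' j = y j))

lemma Fab_pos {n : ℕ} {p : (Fin n → α) → (Fin n → β) → ℝ} (hp : IsPmf p)
    {x : Fin n → α} {y : Fin n → β} (hpos : 0 < p x y) (a b : ℕ) :
    0 < Fab p x y a b :=
  lt_of_lt_of_le hpos (le_pr hp ⟨fun _ _ => rfl, fun _ _ => rfl⟩)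

lemma Fab_zero {n : ℕ} {p : (Fin n → α) → (Fin n → β) → ℝ} (hp : IsPmf p)
    (x : Fin n → α) (y : Fin n → β) : Fab p x y 0 0 = 1 := by
  unfold Fab pr
  simp [hp.2]

lemma Fab_n0 {n : ℕ} (p : (Fin n → α) → (Fin n → β) → ℝ)
    (x : Fin n → α) (y : Fin n → β) : Fab p x y n 0 = pX p x := by
  have hc : ∀ x' : Fin n → α, ∀ y' : Fin n → β,
      ((∀ j : Fin n, (j : ℕ) < n → x' j = x j) ∧
        (∀ j : Fin n, (j : ℕ) < 0 → y' j = y j)) ↔ x' = x := by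
    intro x' y'
    constructor
    · rintro ⟨h1, -⟩; funext j; exact h1 j j.isLt
    · rintro rfl; exact ⟨fun _ _ => rfl, fun j hj => absurd hj (by omega)⟩
  unfold Fab
  rw [pr_congr p hc]
  unfold pr pX
  simp [Finset.sum_ite_eq']

lemma Fab_nn {n : ℕ} (p : (Fin n → α) → (Fin n → β) → ℝ)
    (x : Fin n → α) (y : Fin n → β) : Fab p x y n n = p x y := by
  have hc : ∀ x' : Fin n → α, ∀ y' : Fin n → β,
      ((∀ j : Fin n, (j : ℕ) < n → x' j = x j) ∧
        (∀ j : Fin n, (j : ℕ) < n → y' j = y j)) ↔ (x' = x ∧ y' = y) := by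
    intro x' y'
    constructor
    · rintro ⟨h1, h2⟩
      exact ⟨funext fun j => h1 j j.isLt, funext fun j => h2 j j.isLt⟩
    · rintro ⟨rfl, rfl⟩; exact ⟨fun _ _ => rfl, fun _ _ => rfl⟩
  unfold Fab
  rw [pr_congr p hc]
  unfold pr
  rw [Finset.sum_eq_single x
    (fun b _ hb => Finset.sum_eq_zero fun y' _ => by simp [hb]) (by simp)]
  rw [Finset.sum_eq_single y (fun b _ hb => by simp [hb]) (by simp)]
  simp

lemma condX_n_eq {n : ℕ} (p : (Fin n → α) → (Fin n → β) → ℝ)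
    (x : Fin n → α) (y : Fin n → β) (i : Fin n) :
    condX p n i x y = Fab p x y ((i : ℕ) + 1) 0 / Fab p x y i 0 := by
  unfold condX Fab
  congr 1
  · refine pr_congr p fun x' y' => ?_
    constructor
    · rintro ⟨h1, h2, -⟩
      refine ⟨fun j hj => ?_, fun j hj => absurd hj (by omega)⟩
      rcases Nat.lt_succ_iff_lt_or_eq.1 hj with h | h
      · exact h1 j (Fin.lt_def.2 h)
      · rw [show j = i from Fin.ext h]; exact h2
    · rintro ⟨h1, -⟩
      exact ⟨fun j hj => h1 j (by omega), h1 i (by omega),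
        fun j hj => absurd hj (by have := i.isLt; omega)⟩
  · refine pr_congr p fun x' y' => ?_
    constructor
    · rintro ⟨h1, -⟩
      exact ⟨fun j hj => h1 j (Fin.lt_def.2 hj), fun j hj => absurd hj (by omega)⟩
    · rintro ⟨h1, -⟩
      exact ⟨fun j hj => h1 j (Fin.lt_def.1 hj),
        fun j hj => absurd hj (by have := i.isLt; omega)⟩

lemma condX_1_eq {n : ℕ} (p : (Fin n → α) → (Fin n → β) → ℝ)
    (x : Fin n → α) (y : Fin n → β) (i : Fin n) :
    condX p 1 i x y = Fab p x y ((i : ℕ) + 1) i / Fab p x y i i := by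
  unfold condX Fab
  congr 1
  · refine pr_congr p fun x' y' => ?_
    constructor
    · rintro ⟨h1, h2, h3⟩
      refine ⟨fun j hj => ?_, fun j hj => h3 j (by omega)⟩
      rcases Nat.lt_succ_iff_lt_or_eq.1 hj with h | h
      · exact h1 j (Fin.lt_def.2 h)
      · rw [show j = i from Fin.ext h]; exact h2
    · rintro ⟨h1, h2⟩
      exact ⟨fun j hj => h1 j (by omega), h1 i (by omega), fun j hj => h2 j (by omega)⟩

lemma condY_0_eq {n : ℕ} (p : (Fin n → α) → (Fin n → β) → ℝ)
    (x : Fin n → α) (y : Fin n → β) (i : Fin n) :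
    condY p 0 i x y = Fab p x y ((i : ℕ) + 1) ((i : ℕ) + 1) / Fab p x y ((i : ℕ) + 1) i := by
  unfold condY Fab
  congr 1
  · refine pr_congr p fun x' y' => ?_
    constructor
    · rintro ⟨h1, h2, h3⟩
      refine ⟨fun j hj => h3 j (by omega), fun j hj => ?_⟩
      rcases Nat.lt_succ_iff_lt_or_eq.1 hj with h | h
      · exact h1 j (Fin.lt_def.2 h)
      · rw [show j = i from Fin.ext h]; exact h2
    · rintro ⟨h1, h2⟩
      exact ⟨fun j hj => h2 j (by omega), h2 i (by omega), fun j hj => h1 j (by omega)⟩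
  · refine pr_congr p fun x' y' => ?_
    constructor
    · rintro ⟨h1, h2⟩
      exact ⟨fun j hj => h2 j (by omega), fun j hj => h1 j (Fin.lt_def.2 hj)⟩
    · rintro ⟨h1, h2⟩
      exact ⟨fun j hj => h2 j (Fin.lt_def.1 hj), fun j hj => h1 j (by omega)⟩

lemma prod_ratio (g : ℕ → ℝ) (hg : ∀ k, g k ≠ 0) (n : ℕ) :
    ∏ i ∈ Finset.range n, g (i + 1) / g i = g n / g 0 := by
  induction n with
  | zero => simp [div_self (hg 0)]
  | succ m ih =>
    rw [Finset.prod_range_succ, ih, div_mul_div_comm, mul_comm (g m),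
      mul_div_mul_right _ _ (hg m)]

section Pointwise

variable {n : ℕ} {p : (Fin n → α) → (Fin n → β) → ℝ} {x : Fin n → α} {y : Fin n → β}

lemma condX_n_pos (hp : IsPmf p) (h : 0 < p x y) (i : Fin n) : 0 < condX p n i x y := by
  rw [condX_n_eq]; exact div_pos (Fab_pos hp h _ _) (Fab_pos hp h _ _)

lemma condX_1_pos (hp : IsPmf p) (h : 0 < p x y) (i : Fin n) : 0 < condX p 1 i x y := by
  rw [condX_1_eq]; exact div_pos (Fab_pos hp h _ _) (Fab_pos hp h _ _)

lemma condY_0_pos (hp : IsPmf p) (h : 0 < p x y) (i : Fin n) : 0 < condY p 0 i x y := by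
  rw [condY_0_eq]; exact div_pos (Fab_pos hp h _ _) (Fab_pos hp h _ _)

lemma ccX_1_pos (hp : IsPmf p) (h : 0 < p x y) : 0 < ccX p 1 x y :=
  Finset.prod_pos fun i _ => condX_1_pos hp h i

lemma ccX_n_eq (hp : IsPmf p) (h : 0 < p x y) : ccX p n x y = pX p x := by
  unfold ccX
  calc ∏ i : Fin n, condX p n i x y
      = ∏ i : Fin n, (fun k => Fab p x y (k + 1) 0 / Fab p x y k 0) (i : ℕ) :=
        Finset.prod_congr rfl fun i _ => condX_n_eq p x y i
    _ = ∏ i ∈ Finset.range n, (Fab p x y (i + 1) 0 / Fab p x y i 0) :=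
        Fin.prod_univ_eq_prod_range (fun k => Fab p x y (k + 1) 0 / Fab p x y k 0) n
    _ = Fab p x y n 0 / Fab p x y 0 0 :=
        prod_ratio _ (fun k => (Fab_pos hp h k 0).ne') n
    _ = pX p x := by rw [Fab_n0, Fab_zero hp, div_one]

lemma ccX1_mul_ccY0 (hp : IsPmf p) (h : 0 < p x y) :
    ccX p 1 x y * ccY p 0 x y = p x y := by
  unfold ccX ccY
  rw [← Finset.prod_mul_distrib]
  calc ∏ i : Fin n, (condX p 1 i x y * condY p 0 i x y)
      = ∏ i : Fin n, (fun k => Fab p x y (k + 1) (k + 1) / Fab p x y k k) (i : ℕ) := by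
        refine Finset.prod_congr rfl fun i _ => ?_
        rw [condX_1_eq, condY_0_eq, div_mul_div_comm,
          mul_comm (Fab p x y ((i : ℕ) + 1) (i : ℕ)),
          mul_div_mul_right _ _ (Fab_pos hp h ((i : ℕ) + 1) (i : ℕ)).ne']
    _ = ∏ i ∈ Finset.range n, (Fab p x y (i + 1) (i + 1) / Fab p x y i i) :=
        Fin.prod_univ_eq_prod_range (fun k => Fab p x y (k + 1) (k + 1) / Fab p x y k k) n
    _ = Fab p x y n n / Fab p x y 0 0 :=
        prod_ratio _ (fun k => (Fab_pos hp h k k).ne') n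
    _ = p x y := by rw [Fab_nn, Fab_zero hp, div_one]

end Pointwise

section Pointwise2

variable {n : ℕ} {p : (Fin n → α) → (Fin n → β) → ℝ} {x : Fin n → α} {y : Fin n → β}

lemma pX_pos (hp : IsPmf p) (h : 0 < p x y) : 0 < pX p x :=
  lt_of_lt_of_le h (Finset.single_le_sum (fun y' _ => hp.1 x y') (Finset.mem_univ y))

lemma pY_pos (hp : IsPmf p) (h : 0 < p x y) : 0 < pY p y :=
  lt_of_lt_of_le h (Finset.single_le_sum (fun x' _ => hp.1 x' y) (Finset.mem_univ x))

lemma ccY_0_pos (hp : IsPmf p) (h : 0 < p x y) : 0 < ccY p 0 x y :=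
  Finset.prod_pos fun i _ => condY_0_pos hp h i

lemma sum_logb_ratio (hp : IsPmf p) (h : 0 < p x y) :
    ∑ i : Fin n, Real.logb 2 (condX p 1 i x y / condX p n i x y)
      = Real.logb 2 (ccX p 1 x y) - Real.logb 2 (pX p x) := by
  calc ∑ i : Fin n, Real.logb 2 (condX p 1 i x y / condX p n i x y)
      = ∑ i : Fin n, (Real.logb 2 (condX p 1 i x y) - Real.logb 2 (condX p n i x y)) :=
        Finset.sum_congr rfl fun i _ =>
          Real.logb_div (condX_1_pos hp h i).ne' (condX_n_pos hp h i).ne'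
    _ = (∑ i, Real.logb 2 (condX p 1 i x y)) - ∑ i, Real.logb 2 (condX p n i x y) :=
        Finset.sum_sub_distrib _ _
    _ = Real.logb 2 (ccX p 1 x y) - Real.logb 2 (ccX p n x y) := by
        rw [ccX, ccX, Real.logb_prod _ _ (fun i _ => (condX_1_pos hp h i).ne'),
          Real.logb_prod _ _ (fun i _ => (condX_n_pos hp h i).ne')]
    _ = Real.logb 2 (ccX p 1 x y) - Real.logb 2 (pX p x) := by rw [ccX_n_eq hp h]

lemma point1 (hp : IsPmf p) (h : 0 < p x y) :
    Real.logb 2 (pX p x * ccY p 0 x y) =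
      Real.logb 2 (p x y) -
        ∑ i : Fin n, Real.logb 2 (condX p 1 i x y / condX p n i x y) := by
  have hpX := pX_pos hp h
  have hc1 := ccX_1_pos hp h
  have key : ccY p 0 x y = p x y / ccX p 1 x y :=
    (eq_div_iff hc1.ne').2 (by rw [mul_comm]; exact ccX1_mul_ccY0 hp h)
  rw [sum_logb_ratio hp h, key, Real.logb_mul hpX.ne' (div_pos h hc1).ne',
    Real.logb_div h.ne' hc1.ne']
  ring

lemma point2 (hp : IsPmf p) (h : 0 < p x y) :
    Real.logb 2 (p x y / (pX p x * pY p y)) =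
      -Real.logb 2 (pY p y * ccX p 1 x y) + Real.logb 2 (p x y) +
        ∑ i : Fin n, Real.logb 2 (condX p 1 i x y / condX p n i x y) := by
  have hpX := pX_pos hp h
  have hpY := pY_pos hp h
  have hc1 := ccX_1_pos hp h
  rw [sum_logb_ratio hp h, Real.logb_mul hpY.ne' hc1.ne',
    Real.logb_div h.ne' (mul_pos hpX hpY).ne', Real.logb_mul hpX.ne' hpY.ne']
  ring

end Pointwise2

/-- cost of ignoring the backward link. If the code is designed for
the incorrect distribution `q(x^n,y^n) = p(x^n) p(y^n||x^n)`, then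
`E_p[−log q(X^n,Y^n)] = I(Y^{n-1} → X^n) + H(X^n,Y^n)`; moreover the redundancies
from ignoring the forward link and the backward link add up to `I(X^n;Y^n)`, the
redundancy from ignoring both links (the conservation law, operationally). -/
theorem cost_of_ignoring_backward_link {n : ℕ}
    (p : (Fin n → α) → (Fin n → β) → ℝ) (hp : IsPmf p)
    (hq : ∀ x y, 0 < p x y → 0 < pX p x * ccY p 0 x y)
    (hq' : ∀ x y, 0 < p x y → 0 < pY p y * ccX p 1 x y) :
    -(∑ x, ∑ y, p x y * Real.logb 2 (pX p x * ccY p 0 x y)) =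
        dirY1X p + Hjoint p ∧
    (-(∑ x, ∑ y, p x y * Real.logb 2 (pY p y * ccX p 1 x y)) - Hjoint p) +
        (-(∑ x, ∑ y, p x y * Real.logb 2 (pX p x * ccY p 0 x y)) - Hjoint p) =
      miXY p := by

  have hsum : dirY1X p = ∑ x, ∑ y, p x y *
      ∑ i, Real.logb 2 (condX p 1 i x y / condX p n i x y) := by
    unfold dirY1X
    rw [Finset.sum_comm]
    refine Finset.sum_congr rfl fun x _ => ?_
    rw [Finset.sum_comm]
    exact Finset.sum_congr rfl fun y _ => (Finset.mul_sum _ _ _).symm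
  have t1 : ∀ x y, p x y * Real.logb 2 (pX p x * ccY p 0 x y)
      = p x y * Real.logb 2 (p x y) -
        p x y * ∑ i, Real.logb 2 (condX p 1 i x y / condX p n i x y) := by
    intro x y
    rcases eq_or_lt_of_le (hp.1 x y) with h | h
    · simp [← h]
    · rw [point1 hp h]; ring
  have G1 : -(∑ x, ∑ y, p x y * Real.logb 2 (pX p x * ccY p 0 x y)) =
      dirY1X p + Hjoint p := by
    have e : (∑ x, ∑ y, p x y * Real.logb 2 (pX p x * ccY p 0 x y)) =
        (∑ x, ∑ y, p x y * Real.logb 2 (p x y)) -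
          ∑ x, ∑ y, p x y * ∑ i, Real.logb 2 (condX p 1 i x y / condX p n i x y) := by
      rw [← Finset.sum_sub_distrib]
      refine Finset.sum_congr rfl fun x _ => ?_
      rw [← Finset.sum_sub_distrib]
      exact Finset.sum_congr rfl fun y _ => t1 x y
    rw [e, hsum]; unfold Hjoint; ring
  refine ⟨G1, ?_⟩
  rw [G1]
  have t2 : ∀ x y, p x y * Real.logb 2 (p x y / (pX p x * pY p y))
      = -(p x y * Real.logb 2 (pY p y * ccX p 1 x y)) + p x y * Real.logb 2 (p x y) +
        p x y * ∑ i, Real.logb 2 (condX p 1 i x y / condX p n i x y) := by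
    intro x y
    rcases eq_or_lt_of_le (hp.1 x y) with h | h
    · simp [← h]
    · rw [point2 hp h]; ring
  have e2 : miXY p = -(∑ x, ∑ y, p x y * Real.logb 2 (pY p y * ccX p 1 x y)) +
      (∑ x, ∑ y, p x y * Real.logb 2 (p x y)) + dirY1X p := by
    unfold miXY
    rw [hsum]
    rw [show (∑ x, ∑ y, p x y * Real.logb 2 (p x y / (pX p x * pY p y))) =
        ∑ x, ∑ y, (-(p x y * Real.logb 2 (pY p y * ccX p 1 x y)) +
          p x y * Real.logb 2 (p x y) +
          p x y * ∑ i, Real.logb 2 (condX p 1 i x y / condX p n i x y)) from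
      Finset.sum_congr rfl fun x _ => Finset.sum_congr rfl fun y _ => t2 x y]
    simp only [Finset.sum_add_distrib, Finset.sum_neg_distrib]
  unfold Hjoint
  unfold Hjoint at e2
  linarith [e2]
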